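/- For every integer n > 0, one plus the sum over all tuples (t₁, t₂, ..., tₙ) of nonnegative integers satisfying t₁ + 2t₂ + ... + n·tₙ = n of the multinomial coefficient (t₁+...+tₙ)!/(t₁!·t₂!···tₙ!) multiplied by the rational number n/(t₁+t₂+...+tₙ) equals 2^n. -/

import Mathlib

open Finset

/-- Tuples `(t₁,…,tₙ)` of nonnegative integers (each necessarily `≤ n`) with
`t₁ + 2t₂ + ⋯ + n·tₙ = n`, encoding the partitions of `n` where `i` appears `tᵢ` times. -/
def weightedTuples (n : ℕ) : Finset (Fin n → Fin (n + 1)) :=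
  Finset.univ.filter fun t => ∑ i : Fin n, ((i : ℕ) + 1) * (t i : ℕ) = n

open Polynomial

noncomputable def gp (n : ℕ) : ℚ[X] := ∑ i ∈ Finset.range n, X ^ (i + 1)

lemma coeff_gp (n m : ℕ) : (gp n).coeff m = if m ∈ Finset.Icc 1 n then 1 else 0 := by
  simp only [gp, finset_sum_coeff, coeff_X_pow]
  rcases m with _ | m
  · simp
  · have : ∀ x, (m + 1 = x + 1) = (x = m) := by intro x; simp [eq_comm]
    simp_rw [this]
    rw [Finset.sum_ite_eq' (Finset.range n) m (fun _ => (1:ℚ))]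
    simp only [Finset.mem_range, Finset.mem_Icc]
    have h2 : (1 ≤ m + 1 ∧ m + 1 ≤ n) ↔ m < n := by omega
    by_cases h : m < n <;> simp [h, Nat.succ_le_iff, not_lt.mp]

lemma one_sub_X_mul_gp (n : ℕ) : (1 - X) * gp n = X - X ^ (n + 1) := by
  have h : gp n = X * ∑ i ∈ Finset.range n, X ^ i := by
    rw [Finset.mul_sum, gp]; congr 1; ext i; ring
  have h2 : (1 - X) * ∑ i ∈ Finset.range n, (X:ℚ[X]) ^ i = 1 - X ^ n := by
    have := geom_sum_mul (X : ℚ[X]) n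
    linear_combination -this
  calc (1-X) * gp n = X * ((1-X) * ∑ i ∈ Finset.range n, (X:ℚ[X])^i) := by rw [h]; ring
  _ = X * (1 - X^n) := by rw [h2]
  _ = X - X^(n+1) := by ring

lemma gp_eq_fin (n : ℕ) : gp n = ∑ i : Fin n, X ^ ((i : ℕ) + 1) := by
  rw [gp, ← Fin.sum_univ_eq_sum_range]

lemma gpow_coeff (n k : ℕ) :
    (gp n ^ k).coeff n = ∑ t ∈ (Finset.piAntidiag (Finset.univ : Finset (Fin n)) k).filter
      (fun t => ∑ i : Fin n, ((i : ℕ) + 1) * t i = n), (Nat.multinomial Finset.univ t : ℚ) := by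
  rw [gp_eq_fin, Finset.sum_pow_eq_sum_piAntidiag]
  rw [finset_sum_coeff, Finset.sum_filter]
  refine Finset.sum_congr rfl fun t _ => ?_
  have hprod : (∏ i : Fin n, ((X : ℚ[X]) ^ ((i : ℕ) + 1)) ^ t i)
      = X ^ (∑ i : Fin n, ((i : ℕ) + 1) * t i) := by
    simp_rw [← pow_mul]
    rw [Finset.prod_pow_eq_pow_sum]
  rw [hprod, ← Polynomial.C_eq_natCast, coeff_C_mul, coeff_X_pow]
  by_cases h : ∑ i : Fin n, ((i : ℕ) + 1) * t i = n <;> simp [h]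
  exact fun hh => absurd hh.symm h

lemma tuple_le (n : ℕ) (t' : Fin n → ℕ) (h : ∑ i : Fin n, ((i : ℕ) + 1) * t' i = n) :
    ∀ i : Fin n, t' i ≤ n := by
  intro i
  calc t' i ≤ ((i : ℕ) + 1) * t' i := Nat.le_mul_of_pos_left _ (Nat.succ_pos _)
  _ ≤ ∑ j : Fin n, ((j : ℕ) + 1) * t' j := Finset.single_le_sum
        (f := fun j : Fin n => ((j : ℕ) + 1) * t' j) (fun _ _ => Nat.zero_le _) (Finset.mem_univ i)
  _ = n := h

lemma fiber_eq (n k : ℕ) :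
    ∑ t ∈ (weightedTuples n).filter (fun t => ∑ i : Fin n, (t i : ℕ) = k),
        (Nat.multinomial Finset.univ (fun i => (t i : ℕ)) : ℚ)
      = (gp n ^ k).coeff n := by
  rw [gpow_coeff]
  refine Finset.sum_nbij' (i := fun t => fun i => (t i : ℕ))
    (j := fun t' => fun i => (⟨min (t' i) n, by omega⟩ : Fin (n + 1)))
    ?_ ?_ ?_ ?_ ?_
  · intro t ht
    simp only [weightedTuples, Finset.mem_filter, Finset.mem_univ, true_and] at ht
    simp only [Finset.mem_filter, Finset.mem_piAntidiag, Finset.mem_univ, true_and]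
    exact ⟨⟨ht.2, fun _ _ => trivial⟩, ht.1⟩
  · intro t' ht'
    simp only [Finset.mem_filter, Finset.mem_piAntidiag, Finset.mem_univ, true_and] at ht'
    have hle := tuple_le n t' ht'.2
    simp only [weightedTuples, Finset.mem_filter, Finset.mem_univ, true_and]
    constructor
    · refine (Finset.sum_congr rfl fun i _ => ?_).trans ht'.2
      simp [min_eq_left (hle i)]
    · refine (Finset.sum_congr rfl fun i _ => ?_).trans ht'.1.1
      simp [min_eq_left (hle i)]
  · intro t _
    funext i
    apply Fin.ext
    simp [min_eq_left (Nat.lt_succ_iff.mp (t i).isLt)]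
  · intro t' ht'
    simp only [Finset.mem_filter, Finset.mem_piAntidiag, Finset.mem_univ, true_and] at ht'
    have hle := tuple_le n t' ht'.2
    funext i
    simp [min_eq_left (hle i)]
  · intro t _
    rfl

noncomputable def Dp (n : ℕ) : ℚ[X] := ∑ j ∈ Finset.range n, (2 * X) ^ j
noncomputable def Fp (n : ℕ) : ℚ[X] := ∑ j ∈ Finset.range n, gp n ^ j

lemma coeff_Dp (n m : ℕ) : (Dp n).coeff m = if m < n then 2 ^ m else 0 := by
  have h2 : ∀ j : ℕ, ((2 * X : ℚ[X]) ^ j) = C (2 ^ j) * X ^ j := by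
    intro j
    rw [mul_pow, (map_ofNat C 2).symm, ← C_pow]
  simp only [Dp, finset_sum_coeff, h2, coeff_C_mul, coeff_X_pow]
  rw [Finset.sum_congr rfl (fun j _ => by
    rcases eq_or_ne m j with rfl | h
    · simp
    · simp [h, h.symm] : ∀ j ∈ Finset.range n,
      (2:ℚ)^j * (if m = j then 1 else 0) = if j = m then 2^m else 0)]
  rw [Finset.sum_ite_eq' (Finset.range n) m (fun _ => (2:ℚ)^m)]
  simp [Finset.mem_range]

lemma geom_F (n : ℕ) : (1 - gp n) * Fp n = 1 - gp n ^ n := by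
  have := geom_sum_mul (gp n) n
  rw [Fp]; linear_combination -this

lemma geom_D (n : ℕ) : (1 - 2 * X) * Dp n = 1 - (2 * X) ^ n := by
  have := geom_sum_mul (2 * X : ℚ[X]) n
  rw [Dp]; linear_combination -this

lemma hE (n : ℕ) : (1 - 2 * X) * (Fp n - (1 - X) * Dp n)
    = (1 - X) * ((2 * X) ^ n - gp n ^ n) - X ^ (n + 1) * Fp n := by
  linear_combination (1 - X) * geom_F n - (1 - X) * geom_D n + Fp n * one_sub_X_mul_gp n

lemma coeff_gp_pow_lt (n m : ℕ) (hm : m < n) : (gp n ^ n).coeff m = 0 := by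
  have h : gp n = X * ∑ i ∈ Finset.range n, X ^ i := by
    rw [Finset.mul_sum, gp]; exact Finset.sum_congr rfl fun i _ => pow_succ' X i
  rw [h, mul_pow, mul_comm, coeff_mul_X_pow']
  simp [Nat.not_le.mpr hm]

lemma coeff_delta (n : ℕ) : ∀ m, m < n → (Fp n - (1 - X) * Dp n).coeff m = 0 := by
  set Δ := Fp n - (1 - X) * Dp n with hΔ
  have hQ : ∀ l, l < n → (((2 * X) ^ n - gp n ^ n : ℚ[X])).coeff l = 0 := by
    intro l hl
    rw [coeff_sub, coeff_gp_pow_lt n l hl, mul_pow, coeff_mul_X_pow']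
    simp [Nat.not_le.mpr hl]
  have hRHS : ∀ m, m < n → ((1 - 2 * X) * Δ).coeff m = 0 := by
    intro m hm
    rw [hE n]
    rw [show ((1 - X) * ((2 * X) ^ n - gp n ^ n) - X ^ (n + 1) * Fp n : ℚ[X])
        = ((2 * X) ^ n - gp n ^ n) - X * ((2 * X) ^ n - gp n ^ n) - Fp n * X ^ (n + 1) by ring]
    rw [coeff_sub, coeff_sub, hQ m hm, coeff_mul_X_pow']
    rw [if_neg (by omega : ¬ (n + 1 ≤ m))]
    rcases m with _ | m'
    · simp
    · rw [coeff_X_mul, hQ m' (by omega)]; ring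
  intro m
  induction m using Nat.strong_induction_on with
  | _ m ih =>
    intro hm
    have h0 := hRHS m hm
    rw [show ((1 - 2 * X) * Δ : ℚ[X]) = Δ - 2 * (X * Δ) by ring, coeff_sub,
      coeff_ofNat_mul] at h0
    rcases m with _ | m'
    · simpa using h0
    · rw [coeff_X_mul, ih m' (by omega) (by omega)] at h0
      simpa using h0

lemma hg' (n : ℕ) : (1 - X) * derivative (gp n)
    = 1 + gp n - C ((n : ℚ) + 1) * X ^ n := by
  have h := congrArg derivative (one_sub_X_mul_gp n)
  simp only [derivative_mul, derivative_sub, derivative_one, derivative_X, derivative_X_pow,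
    Nat.add_sub_cancel, Nat.cast_add, Nat.cast_one] at h
  linear_combination h

lemma coeff_Dp_gp (n : ℕ) (hn : 1 ≤ n) :
    (Dp n * gp n).coeff (n - 1) = 2 ^ (n - 1) - 1 := by
  rw [coeff_mul, Finset.Nat.sum_antidiagonal_eq_sum_range_succ_mk]
  rw [show (n - 1).succ = n by omega]
  have : ∀ a ∈ Finset.range n, (Dp n).coeff a * (gp n).coeff (n - 1 - a)
      = if a ∈ Finset.range (n - 1) then 2 ^ a else 0 := by
    intro a ha
    rw [Finset.mem_range] at ha
    rw [coeff_Dp, coeff_gp, if_pos ha]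
    simp only [Finset.mem_range, Finset.mem_Icc]
    by_cases h : a < n - 1
    · rw [if_pos h, if_pos (by omega)]; ring
    · rw [if_neg h, if_neg (by omega)]; ring
  rw [Finset.sum_congr rfl this, Finset.sum_ite_mem,
    Finset.inter_eq_right.mpr (Finset.range_subset_range.mpr (by omega))]
  have := geom_sum_eq (by norm_num : (2:ℚ) ≠ 1) (n - 1)
  rw [this]
  norm_num

lemma coeff_F_mul_deriv (n : ℕ) (hn : 1 ≤ n) :
    (Fp n * derivative (gp n)).coeff (n - 1) = 2 ^ n - 1 := by
  have hsplit : Fp n * derivative (gp n)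
      = Dp n * ((1 - X) * derivative (gp n))
        + (Fp n - (1 - X) * Dp n) * derivative (gp n) := by ring
  have hDelta : ((Fp n - (1 - X) * Dp n) * derivative (gp n)).coeff (n - 1) = 0 := by
    rw [coeff_mul]
    refine Finset.sum_eq_zero fun x hx => ?_
    rw [Finset.HasAntidiagonal.mem_antidiagonal] at hx
    rw [coeff_delta n x.1 (by omega)]
    ring
  rw [hsplit, coeff_add, hDelta, add_zero, hg' n]
  rw [show (Dp n * (1 + gp n - C ((n:ℚ) + 1) * X ^ n) : ℚ[X])
      = Dp n + Dp n * gp n - C ((n:ℚ) + 1) * (Dp n * X ^ n) by ring]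
  rw [coeff_sub, coeff_add, coeff_C_mul, coeff_mul_X_pow', if_neg (by omega : ¬ n ≤ n - 1)]
  rw [coeff_Dp, if_pos (by omega : n - 1 < n), coeff_Dp_gp n hn]
  have h2 : (2:ℚ) ^ n = 2 ^ (n - 1) * 2 := by
    rw [← pow_succ, show n - 1 + 1 = n by omega]
  rw [h2]; ring

lemma term_eq (n k : ℕ) (hn : 1 ≤ n) (hk : 1 ≤ k) :
    ((n : ℚ) / k) * (gp n ^ k).coeff n
      = (gp n ^ (k - 1) * derivative (gp n)).coeff (n - 1) := by
  have hd := congrArg (fun p => Polynomial.coeff p (n - 1)) (derivative_pow (gp n) k)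
  simp only [coeff_derivative] at hd
  rw [mul_assoc, coeff_C_mul] at hd
  rw [show n - 1 + 1 = n by omega] at hd
  have hcast : ((n - 1 : ℕ) : ℚ) + 1 = n := by
    push_cast [hn]; ring
  rw [hcast] at hd
  have hk0 : (k : ℚ) ≠ 0 := by positivity
  field_simp
  linear_combination hd

lemma key_sum (n : ℕ) (hn : 0 < n) :
    ∑ k ∈ Finset.Icc 1 n, ((n : ℚ) / k) * (gp n ^ k).coeff n = 2 ^ n - 1 := by
  rw [Finset.sum_congr rfl (fun k hk =>
    term_eq n k hn (Finset.mem_Icc.mp hk).1)]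
  have hre : ∑ k ∈ Finset.Icc 1 n, (gp n ^ (k - 1) * derivative (gp n)).coeff (n - 1)
      = ∑ i ∈ Finset.range n, (gp n ^ i * derivative (gp n)).coeff (n - 1) := by
    refine Finset.sum_nbij' (i := fun k => k - 1) (j := fun m => m + 1) ?_ ?_ ?_ ?_ ?_ <;>
      intro a ha <;> simp only [Finset.mem_Icc, Finset.mem_range] at * <;> omega
  rw [hre]
  have : ∑ i ∈ Finset.range n, (gp n ^ i * derivative (gp n)).coeff (n - 1)
      = (Fp n * derivative (gp n)).coeff (n - 1) := by
    rw [Fp, Finset.sum_mul, finset_sum_coeff]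
  rw [this, coeff_F_mul_deriv n hn]

theorem stmt15 (n : ℕ) (hn : 0 < n) :
    1 + ∑ t ∈ weightedTuples n,
        (Nat.multinomial Finset.univ (fun i => (t i : ℕ)) : ℚ) *
          ((n : ℚ) / ((∑ i : Fin n, (t i : ℕ) : ℕ) : ℚ))
      = 2 ^ n := by
  have hmap : ∀ t ∈ weightedTuples n, (∑ i : Fin n, (t i : ℕ)) ∈ Finset.Icc 1 n := by
    intro t ht
    rw [weightedTuples, Finset.mem_filter] at ht
    have hw := ht.2
    have hle : (∑ i : Fin n, (t i : ℕ)) ≤ n :=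
      le_of_le_of_eq (Finset.sum_le_sum fun i _ => Nat.le_mul_of_pos_left _ (Nat.succ_pos _)) hw
    rcases Nat.eq_zero_or_pos (∑ i : Fin n, (t i : ℕ)) with h0 | hpos
    · exfalso
      rw [Finset.sum_eq_zero_iff] at h0
      have h1 : ∑ i : Fin n, ((i : ℕ) + 1) * (t i : ℕ) = 0 :=
        Finset.sum_eq_zero fun i hi => by rw [h0 i hi]; ring
      omega
    · exact Finset.mem_Icc.mpr ⟨hpos, hle⟩
  rw [← Finset.sum_fiberwise_of_maps_to hmap]
  have hinner : ∀ k ∈ Finset.Icc 1 n,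
      (∑ t ∈ (weightedTuples n).filter (fun t => ∑ i : Fin n, (t i : ℕ) = k),
        (Nat.multinomial Finset.univ (fun i => (t i : ℕ)) : ℚ) *
          ((n : ℚ) / ((∑ i : Fin n, (t i : ℕ) : ℕ) : ℚ)))
      = ((n : ℚ) / k) * (gp n ^ k).coeff n := by
    intro k hk
    rw [← fiber_eq n k, Finset.mul_sum]
    refine Finset.sum_congr rfl fun t ht => ?_
    rw [Finset.mem_filter] at ht
    rw [ht.2, mul_comm]
  rw [Finset.sum_congr rfl hinner, key_sum n hn]
  ring
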